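/- On ℝ^4 with coordinates (x, y, y1, y2), consider the vector field X = x^2*∂_x - 2*x*∂_y + (-2 - 2*x*y1)*∂_{y1} + (-2*y1 - 4*x*y2)*∂_{y2}. Then X annihilates the function I = (2*y2 - y1^2)*e^{-2*y}, i.e., X(I) = 0. -/

import Mathlib

namespace Stmt11

/-- Points of `ℝ⁴` with coordinates `(x, y, y1, y2)`. -/
abbrev Pt := Fin 4 → ℝ

/-- The second prolongation of the point field `x²∂_x − 2x∂_y`:
`X = x²∂_x − 2x∂_y + (−2 − 2x y₁)∂_{y1} + (−2y₁ − 4x y₂)∂_{y2}`. -/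
def X : Pt → Pt := fun p =>
  ![(p 0) ^ 2, -2 * p 0, -2 - 2 * p 0 * p 2, -2 * p 2 - 4 * p 0 * p 3]

/-- The absolute differential invariant `I = (2y₂ − y₁²) e^{−2y}`. -/
noncomputable def I : Pt → ℝ := fun p => (2 * p 3 - (p 2) ^ 2) * Real.exp (-2 * p 1)

/-- `X` annihilates the invariant `I = (2y₂ − y₁²) e^{−2y}`. -/
theorem X_annihilates_I (p : Pt) : fderiv ℝ I p (X p) = 0 := by
  have h1 : HasFDerivAt (𝕜 := ℝ) (fun q : Pt => q 1) (ContinuousLinearMap.proj 1) p :=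
    hasFDerivAt_apply 1 p
  have h2 : HasFDerivAt (𝕜 := ℝ) (fun q : Pt => q 2) (ContinuousLinearMap.proj 2) p :=
    hasFDerivAt_apply 2 p
  have h3 : HasFDerivAt (𝕜 := ℝ) (fun q : Pt => q 3) (ContinuousLinearMap.proj 3) p :=
    hasFDerivAt_apply 3 p
  have h22 : HasFDerivAt (𝕜 := ℝ) (fun q : Pt => (q 2) ^ 2)
      ((p 2) • (ContinuousLinearMap.proj 2) + (p 2) • (ContinuousLinearMap.proj 2)) p := by
    have := h2.mul h2
    simpa [sq, Pi.mul_def] using this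
  have hf : HasFDerivAt (𝕜 := ℝ) (fun q : Pt => 2 * q 3 - (q 2) ^ 2) _ p :=
    (h3.const_mul 2).sub h22
  have hg := (h1.const_mul (-2 : ℝ)).exp
  have hI : HasFDerivAt I _ p := hf.mul hg
  rw [hI.fderiv]
  simp [X]
  ring

end Stmt11
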